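/- arXiv:1512.07846 — 2 statements merged into one kernel-verified Lean document; each statement's English description precedes it below -/
import Mathlib

section
/- For any subspaces H₁, H₂, H₃ of E, the double commutator satisfies [[Π(H₁), Π(H₃)], Π(H₂)] = (Π(H₁) − Π(H₃))·𝔇(H₁,H₂,H₃)·Π(H₂) + Π(H₂)·𝔇(H₁,H₂,H₃)·(Π(H₁) − Π(H₃)), where the products are compositions of operators and [A,B] = AB − BA. -/
variable {E : Type*} [NormedAddCommGroup E] [InnerProductSpace ℂ E] [FiniteDimensional ℂ E]

/-- The orthogonal projection onto a subspace `K`, regarded as an operator on `E`. -/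
noncomputable def proj (K : Submodule ℂ E) : E →L[ℂ] E :=
  K.subtypeL.comp (K.orthogonalProjection)

/-- The Möbius (non-additivity) operator `𝔇(H₁,H₂)`. -/
noncomputable def MobD (H₁ H₂ : Submodule ℂ E) : E →L[ℂ] E :=
  proj (H₁ ⊔ H₂) + proj (H₁ ⊓ H₂) - proj H₁ - proj H₂

/-- The three-subspace Möbius operator `𝔇(H₁,H₂,H₃)`. -/
noncomputable def MobD₃ (H₁ H₂ H₃ : Submodule ℂ E) : E →L[ℂ] E :=
  proj (H₁ ⊔ H₂ ⊔ H₃) - proj (H₁ ⊔ H₂) - proj (H₁ ⊔ H₃) - proj (H₂ ⊔ H₃)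
    + proj H₁ + proj H₂ + proj H₃ - proj (H₁ ⊓ H₂ ⊓ H₃)

/-- The dual three-subspace Möbius operator `𝔇̃(H₁,H₂,H₃)`. -/
noncomputable def MobDt₃ (H₁ H₂ H₃ : Submodule ℂ E) : E →L[ℂ] E :=
  proj (H₁ ⊓ H₂ ⊓ H₃) - proj (H₁ ⊓ H₂) - proj (H₁ ⊓ H₃) - proj (H₂ ⊓ H₃)
    + proj H₁ + proj H₂ + proj H₃ - proj (H₁ ⊔ H₂ ⊔ H₃)

lemma proj_isSelfAdjoint (K : Submodule ℂ E) : IsSelfAdjoint (proj K) :=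
  isSelfAdjoint_starProjection K

lemma proj_comp_of_le {H K : Submodule ℂ E} (h : H ≤ K) : proj K * proj H = proj H := by
  ext x
  simp only [ContinuousLinearMap.mul_apply, proj, ContinuousLinearMap.comp_apply,
    Submodule.subtypeL_apply]
  exact K.starProjection_eq_self_iff.mpr (h (H.orthogonalProjection x).2)

lemma proj_comp_of_le' {H K : Submodule ℂ E} (h : H ≤ K) : proj H * proj K = proj H := by
  have := congrArg star (proj_comp_of_le h)
  rwa [star_mul, (proj_isSelfAdjoint H).star_eq, (proj_isSelfAdjoint K).star_eq] at this

theorem double_commutator_eq (H₁ H₂ H₃ : Submodule ℂ E) :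
    (proj H₁ * proj H₃ - proj H₃ * proj H₁) * proj H₂
      - proj H₂ * (proj H₁ * proj H₃ - proj H₃ * proj H₁) =
    (proj H₁ - proj H₃) * MobD₃ H₁ H₂ H₃ * proj H₂
      + proj H₂ * MobD₃ H₁ H₂ H₃ * (proj H₁ - proj H₃) := by
  have h2s : H₂ ≤ H₁ ⊔ H₂ ⊔ H₃ := le_sup_of_le_left le_sup_right
  have hi2 : H₁ ⊓ H₂ ⊓ H₃ ≤ H₂ := le_trans inf_le_left inf_le_right
  have hi1 : H₁ ⊓ H₂ ⊓ H₃ ≤ H₁ := le_trans inf_le_left inf_le_left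
  have hi3 : H₁ ⊓ H₂ ⊓ H₃ ≤ H₃ := inf_le_right
  have key : MobD₃ H₁ H₂ H₃ * proj H₂
      = (proj H₁ + proj H₃ - proj (H₁ ⊔ H₃)) * proj H₂ - proj (H₁ ⊓ H₂ ⊓ H₃) := by
    rw [MobD₃]
    simp only [sub_mul, add_mul]
    rw [proj_comp_of_le h2s, proj_comp_of_le (le_sup_right : H₂ ≤ H₁ ⊔ H₂),
      proj_comp_of_le (le_sup_left : H₂ ≤ H₂ ⊔ H₃), proj_comp_of_le (le_refl H₂),
      proj_comp_of_le' hi2]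
    abel
  have key2 : proj H₂ * MobD₃ H₁ H₂ H₃
      = proj H₂ * (proj H₁ + proj H₃ - proj (H₁ ⊔ H₃)) - proj (H₁ ⊓ H₂ ⊓ H₃) := by
    rw [MobD₃]
    simp only [mul_sub, mul_add]
    rw [proj_comp_of_le' h2s, proj_comp_of_le' (le_sup_right : H₂ ≤ H₁ ⊔ H₂),
      proj_comp_of_le' (le_sup_left : H₂ ≤ H₂ ⊔ H₃), proj_comp_of_le' (le_refl H₂),
      proj_comp_of_le hi2]
    abel
  have comm1 : (proj H₁ - proj H₃) * (proj H₁ + proj H₃ - proj (H₁ ⊔ H₃))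
      = proj H₁ * proj H₃ - proj H₃ * proj H₁ := by
    simp only [sub_mul, mul_add, mul_sub]
    rw [proj_comp_of_le' (le_refl H₁), proj_comp_of_le' (le_refl H₃),
      proj_comp_of_le' (le_sup_left : H₁ ≤ H₁ ⊔ H₃),
      proj_comp_of_le' (le_sup_right : H₃ ≤ H₁ ⊔ H₃)]
    abel
  have comm2 : (proj H₁ + proj H₃ - proj (H₁ ⊔ H₃)) * (proj H₁ - proj H₃)
      = proj H₃ * proj H₁ - proj H₁ * proj H₃ := by
    simp only [add_mul, sub_mul, mul_sub]
    rw [proj_comp_of_le' (le_refl H₁), proj_comp_of_le' (le_refl H₃),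
      proj_comp_of_le (le_sup_left : H₁ ≤ H₁ ⊔ H₃),
      proj_comp_of_le (le_sup_right : H₃ ≤ H₁ ⊔ H₃)]
    abel
  have hIz : (proj H₁ - proj H₃) * proj (H₁ ⊓ H₂ ⊓ H₃) = 0 := by
    rw [sub_mul, proj_comp_of_le hi1, proj_comp_of_le hi3, sub_self]
  have hIz' : proj (H₁ ⊓ H₂ ⊓ H₃) * (proj H₁ - proj H₃) = 0 := by
    rw [mul_sub, proj_comp_of_le' hi1, proj_comp_of_le' hi3, sub_self]
  rw [mul_assoc (proj H₁ - proj H₃), key, key2, mul_sub (proj H₁ - proj H₃), ← mul_assoc,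
    comm1, hIz, sub_mul _ (proj (H₁ ⊓ H₂ ⊓ H₃)), mul_assoc, comm2, hIz', sub_zero, sub_zero,
    mul_sub (proj H₂)]
  noncomm_ring
end

section
/- If H₁, H₂, H₀ are subspaces of E such that the orthogonal projections Π(H₁) and Π(H₂) each commute with Π(H₀) (i.e. [Π(H₁),Π(H₀)] = 0 and [Π(H₂),Π(H₀)] = 0), then ϖ₁(H₁,H₂|H₀) = 0 and ϖ₂(H₁,H₂|H₀) = 0. -/
variable {E : Type*} [NormedAddCommGroup E] [InnerProductSpace ℂ E] [FiniteDimensional ℂ E]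

/-- The non-distributivity projector `ϖ₁(H₁,H₂|H₀)`. -/
noncomputable def varpi₁ (H₁ H₂ H₀ : Submodule ℂ E) : E →L[ℂ] E :=
  proj ((H₁ ⊔ H₀) ⊓ (H₂ ⊔ H₀)) - proj ((H₁ ⊓ H₂) ⊔ H₀)

/-- The non-distributivity projector `ϖ₂(H₁,H₂|H₀)`. -/
noncomputable def varpi₂ (H₁ H₂ H₀ : Submodule ℂ E) : E →L[ℂ] E :=
  proj ((H₁ ⊔ H₂) ⊓ H₀) - proj ((H₁ ⊓ H₀) ⊔ (H₂ ⊓ H₀))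

lemma proj_mem_aux (K : Submodule ℂ E) (x : E) : proj K x ∈ K := by
  simp [proj]

lemma proj_eq_self_aux {K : Submodule ℂ E} {x : E} (hx : x ∈ K) : proj K x = x := by
  exact (Submodule.starProjection_eq_self_iff (K := K)).mpr hx

lemma proj_inv_aux {K H₀ : Submodule ℂ E}
    (h : proj K * proj H₀ - proj H₀ * proj K = 0) {x : E} (hx : x ∈ K) :
    proj H₀ x ∈ K := by
  have h' : proj K * proj H₀ = proj H₀ * proj K := by rwa [sub_eq_zero] at h
  have hxx : proj H₀ x = proj K (proj H₀ x) := by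
    conv_lhs => rw [← proj_eq_self_aux hx]
    have := congrArg (fun T : E →L[ℂ] E => T x) h'
    simpa using this.symm
  rw [hxx]; exact proj_mem_aux _ _

theorem varpi_eq_zero_of_commute (H₁ H₂ H₀ : Submodule ℂ E)
    (h₁ : proj H₁ * proj H₀ - proj H₀ * proj H₁ = 0)
    (h₂ : proj H₂ * proj H₀ - proj H₀ * proj H₂ = 0) :
    varpi₁ H₁ H₂ H₀ = 0 ∧ varpi₂ H₁ H₂ H₀ = 0 := by
  have eq₁ : (H₁ ⊔ H₀) ⊓ (H₂ ⊔ H₀) = (H₁ ⊓ H₂) ⊔ H₀ := by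
    apply le_antisymm
    · intro x hx
      obtain ⟨hxa, hxb⟩ := Submodule.mem_inf.mp hx
      obtain ⟨a, ha, c, hc, hac⟩ := Submodule.mem_sup.mp hxa
      obtain ⟨b, hb, d, hd, hbd⟩ := Submodule.mem_sup.mp hxb
      have hy1 : x - proj H₀ x ∈ H₁ := by
        have : x - proj H₀ x = a - proj H₀ a := by
          rw [← hac]; rw [map_add, proj_eq_self_aux hc]; abel
        rw [this]
        exact H₁.sub_mem ha (proj_inv_aux h₁ ha)
      have hy2 : x - proj H₀ x ∈ H₂ := by
        have : x - proj H₀ x = b - proj H₀ b := by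
          rw [← hbd]; rw [map_add, proj_eq_self_aux hd]; abel
        rw [this]
        exact H₂.sub_mem hb (proj_inv_aux h₂ hb)
      refine Submodule.mem_sup.mpr ⟨x - proj H₀ x, Submodule.mem_inf.mpr ⟨hy1, hy2⟩,
        proj H₀ x, proj_mem_aux _ _, by abel⟩
    · exact sup_le (le_inf (inf_le_left.trans le_sup_left) (inf_le_right.trans le_sup_left))
        (le_inf le_sup_right le_sup_right)
  have eq₂ : (H₁ ⊔ H₂) ⊓ H₀ = (H₁ ⊓ H₀) ⊔ (H₂ ⊓ H₀) := by
    apply le_antisymm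
    · intro x hx
      obtain ⟨hxs, hx0⟩ := Submodule.mem_inf.mp hx
      obtain ⟨a, ha, b, hb, hab⟩ := Submodule.mem_sup.mp hxs
      have hxp : x = proj H₀ a + proj H₀ b := by
        rw [← map_add, hab, proj_eq_self_aux hx0]
      rw [hxp]
      exact Submodule.add_mem_sup
        (Submodule.mem_inf.mpr ⟨proj_inv_aux h₁ ha, proj_mem_aux _ _⟩)
        (Submodule.mem_inf.mpr ⟨proj_inv_aux h₂ hb, proj_mem_aux _ _⟩)
    · exact sup_le (inf_le_inf_right _ (le_sup_left)) (inf_le_inf_right _ (le_sup_right))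
  constructor
  · rw [varpi₁, eq₁, sub_self]
  · rw [varpi₂, eq₂, sub_self]
end
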